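/- For any matrices X_1, ..., X_n in the Stiefel manifold St_F(d, r) (matrices X ∈ F^{d×r} with X*X = I_r, F = R or C) with n ≥ 2, the minimum pairwise Frobenius distance min_{i≠j} ||X_i - X_j||_Fro is at most sqrt(2rn/(n-1)). -/

import Mathlib

open Matrix

/-- The Frobenius (chordal) distance between two matrices. -/
noncomputable def frobDist {𝕜 : Type*} [RCLike 𝕜] {d r : ℕ}
    (X Y : Matrix (Fin d) (Fin r) 𝕜) : ℝ :=
  Real.sqrt (∑ i, ∑ j, ‖X i j - Y i j‖ ^ 2)


lemma aux_simplex {E : Type*} [NormedAddCommGroup E] [InnerProductSpace ℝ E]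
    (n : ℕ) (hn : 2 ≤ n) (v : Fin n → E) (c : ℝ)
    (hc : ∀ i, ‖v i‖ ^ 2 = c) :
    ∃ i j : Fin n, i ≠ j ∧ ‖v i - v j‖ ^ 2 ≤ 2 * c * n / ((n : ℝ) - 1) := by
  by_contra h
  push_neg at h
  set B : ℝ := 2 * c * n / ((n : ℝ) - 1) with hB
  have hn1 : (1 : ℝ) ≤ (n : ℝ) := by exact_mod_cast Nat.one_le_of_lt hn
  have hn1' : (0 : ℝ) < (n : ℝ) - 1 := by
    have : (2 : ℝ) ≤ (n : ℝ) := by exact_mod_cast hn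
    linarith
  -- key identity
  have key : ∑ i, ∑ j, ‖v i - v j‖ ^ 2 = 2 * n * n * c - 2 * ‖∑ i, v i‖ ^ 2 := by
    have : ∀ i j : Fin n, ‖v i - v j‖ ^ 2 = c - 2 * (inner ℝ (v i) (v j) : ℝ) + c := by
      intro i j; rw [norm_sub_sq_real, hc, hc]
    simp_rw [this, Finset.sum_add_distrib, Finset.sum_sub_distrib, Finset.sum_const,
      ← Finset.mul_sum, ← inner_sum, ← sum_inner, real_inner_self_eq_norm_sq,
      Finset.card_univ, Fintype.card_fin, nsmul_eq_mul]
    ring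
  have hT : ∑ i, ∑ j, ‖v i - v j‖ ^ 2 ≤ 2 * n * n * c := by
    rw [key]; nlinarith [sq_nonneg ‖∑ i, v i‖]
  -- lower bound
  have hlow : ∀ i j : Fin n, (if i = j then (0:ℝ) else B) ≤ ‖v i - v j‖ ^ 2 := by
    intro i j
    by_cases hij : i = j
    · simp [hij]
    · simp only [hij, if_false]; exact (h i j hij).le
  have h0n : 0 < n := by omega
  have h1n : 1 < n := by omega
  have h01 : (⟨0, h0n⟩ : Fin n) ≠ (⟨1, h1n⟩ : Fin n) := by
    simp [Fin.ext_iff]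
  have hstrict : (∑ p : Fin n × Fin n, (if p.1 = p.2 then (0:ℝ) else B)) <
      ∑ p : Fin n × Fin n, ‖v p.1 - v p.2‖ ^ 2 := by
    apply Finset.sum_lt_sum
    · intro p _; exact hlow p.1 p.2
    · refine ⟨((⟨0, h0n⟩ : Fin n), (⟨1, h1n⟩ : Fin n)), Finset.mem_univ _, ?_⟩
      simp only [h01, if_false]
      exact h _ _ h01
  have hsum1 : (∑ p : Fin n × Fin n, (if p.1 = p.2 then (0:ℝ) else B))
      = n * ((n : ℝ) - 1) * B := by
    rw [Fintype.sum_prod_type]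
    have : ∀ i : Fin n, ∑ j : Fin n, (if i = j then (0:ℝ) else B) = ((n:ℝ) - 1) * B := by
      intro i
      have : ∑ j : Fin n, (if i = j then (0:ℝ) else B)
          = ∑ j : Fin n, (B - if i = j then B else 0) := by
        apply Finset.sum_congr rfl; intro j _; by_cases hij : i = j <;> simp [hij]
      rw [this, Finset.sum_sub_distrib, Finset.sum_const, Finset.sum_ite_eq,
        if_pos (Finset.mem_univ i), Finset.card_univ, Fintype.card_fin, nsmul_eq_mul]
      ring
    simp_rw [this, Finset.sum_const, Finset.card_univ, Fintype.card_fin, nsmul_eq_mul]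
    ring
  have hsum2 : (∑ p : Fin n × Fin n, ‖v p.1 - v p.2‖ ^ 2) = ∑ i, ∑ j, ‖v i - v j‖ ^ 2 := by
    rw [Fintype.sum_prod_type]
  have hBval : (n : ℝ) * ((n : ℝ) - 1) * B = 2 * n * n * c := by
    rw [hB]; field_simp
  rw [hsum1, hsum2, hBval] at hstrict
  linarith

noncomputable def embMat {𝕜 : Type*} [RCLike 𝕜] {d r : ℕ}
    (X : Matrix (Fin d) (Fin r) 𝕜) : EuclideanSpace ℝ (Fin d × Fin r × Fin 2) :=
  WithLp.toLp 2 (fun p : Fin d × Fin r × Fin 2 => ![RCLike.re (X p.1 p.2.1), RCLike.im (X p.1 p.2.1)] p.2.2)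

lemma embMat_dist_sq {𝕜 : Type*} [RCLike 𝕜] {d r : ℕ}
    (X Y : Matrix (Fin d) (Fin r) 𝕜) :
    ‖embMat X - embMat Y‖ ^ 2 = ∑ i, ∑ j, ‖X i j - Y i j‖ ^ 2 := by
  rw [EuclideanSpace.norm_eq, Real.sq_sqrt (by positivity)]
  rw [Fintype.sum_prod_type]
  apply Finset.sum_congr rfl; intro i _
  rw [Fintype.sum_prod_type]
  apply Finset.sum_congr rfl; intro j _
  have : ∀ p, (embMat X - embMat Y) p = embMat X p - embMat Y p := fun p => rfl
  simp only [this, Fin.sum_univ_two, embMat, WithLp.ofLp_sub, Pi.sub_apply, WithLp.ofLp_toLp, Matrix.cons_val_zero, Matrix.cons_val_one,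
    Matrix.head_cons, Real.norm_eq_abs, sq_abs]
  rw [RCLike.norm_sq_eq_def, map_sub, map_sub]
  ring

lemma embMat_norm_sq {𝕜 : Type*} [RCLike 𝕜] {d r : ℕ}
    (X : Matrix (Fin d) (Fin r) 𝕜) :
    ‖embMat X‖ ^ 2 = ∑ i, ∑ j, ‖X i j‖ ^ 2 := by
  have h0 : embMat (0 : Matrix (Fin d) (Fin r) 𝕜) = 0 := by
    ext p; obtain ⟨i, j, k⟩ := p; fin_cases k <;> simp [embMat]
  have := embMat_dist_sq X 0
  simpa [h0] using this

theorem stiefel_simplex_bound {𝕜 : Type*} [RCLike 𝕜] (d r n : ℕ) (hn : 2 ≤ n)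
    (X : Fin n → Matrix (Fin d) (Fin r) 𝕜)
    (hSt : ∀ i, (X i)ᴴ * X i = 1) :
    ∃ i j : Fin n, i ≠ j ∧
      frobDist (X i) (X j) ≤ Real.sqrt (2 * r * n / ((n : ℝ) - 1)) := by
  have hc : ∀ i, ‖embMat (X i)‖ ^ 2 = (r : ℝ) := by
    intro i
    rw [embMat_norm_sq, Finset.sum_comm]
    have hcol : ∀ j : Fin r, ∑ k : Fin d, ‖X i k j‖ ^ 2 = (1:ℝ) := by
      intro j
      have h1 := congrFun (congrFun (hSt i) j) j
      simp only [Matrix.mul_apply, Matrix.conjTranspose_apply, Matrix.one_apply_eq] at h1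
      have h2 : (∑ k, ((‖X i k j‖ ^ 2 : ℝ) : 𝕜)) = 1 := by
        rw [← h1]
        apply Finset.sum_congr rfl; intro k _
        rw [RCLike.star_def, RCLike.conj_mul]; push_cast; ring
      exact_mod_cast h2
    simp [hcol]
  obtain ⟨i, j, hij, hle⟩ := aux_simplex n hn (fun i => embMat (X i)) (r : ℝ) hc
  refine ⟨i, j, hij, ?_⟩
  rw [frobDist]
  apply Real.sqrt_le_sqrt
  rw [← embMat_dist_sq]
  convert hle using 2
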